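/- arXiv:2504.20029 — 3 statements merged into one kernel-verified Lean document; each statement's English description precedes it below -/
import Mathlib

section
/- Let R be a ring in which 2 = 0, let e ∈ R be an idempotent, and let x ∈ R satisfy e·x + x·e = x. Then for every natural number m, (e + x)^(2^m) = e + Σ_{i=0}^{m} x^(2^i). -/
private lemma aux_two {R : Type*} [Ring R] (h2 : (2 : R) = 0) (a : R) :
    a + a = 0 := by
  have := congrArg (· * a) h2
  simpa [two_mul] using this

private lemma aux_sq {R : Type*} [Ring R] (h2 : (2 : R) = 0) (a b : R)
    (h : a * b = b * a) : (a + b) ^ 2 = a ^ 2 + b ^ 2 := by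
  have : (a + b) ^ 2 = a * a + (a * b + b * a) + b * b := by
    rw [pow_two, mul_add, add_mul, add_mul]; abel
  rw [this, h, aux_two h2 (b * a), ← pow_two, ← pow_two]
  abel

private lemma aux_sum_sq {R : Type*} [Ring R] (h2 : (2 : R) = 0) (x : R) (n : ℕ) :
    (∑ i ∈ Finset.range n, x ^ 2 ^ i) ^ 2 = ∑ i ∈ Finset.range n, x ^ 2 ^ (i + 1) := by
  induction n with
  | zero => simp
  | succ k ih =>
    rw [Finset.sum_range_succ,
      aux_sq h2 _ _ (Commute.sum_left _ _ _ fun i _ => Commute.pow_pow_self x _ _),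
      ih, Finset.sum_range_succ, ← pow_mul, ← pow_succ]

theorem stmt_6 {R : Type*} [Ring R] (h2 : (2 : R) = 0)
    (e x : R) (he : e * e = e) (hx : e * x + x * e = x) (m : ℕ) :
    (e + x) ^ (2 ^ m) = e + ∑ i ∈ Finset.range (m + 1), x ^ (2 ^ i) := by
  -- e commutes with x^2
  have hc2 : Commute e (x ^ 2) := by
    have h1 : (e * x + x * e) * x = e * (x * x) + x * e * x := by
      rw [add_mul, mul_assoc]
    have h1' : x * (e * x + x * e) = x * e * x + x * x * e := by
      rw [mul_add, ← mul_assoc, ← mul_assoc]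
    rw [hx] at h1 h1'
    have : e * (x * x) + x * e * x = x * e * x + x * x * e := by rw [← h1, ← h1']
    have heq : e * (x * x) = x * x * e := by
      rw [add_comm (e * (x * x))] at this
      exact add_left_cancel this
    simpa [Commute, SemiconjBy, pow_two] using heq
  have hci : ∀ i : ℕ, Commute e (x ^ 2 ^ (i + 1)) := by
    intro i
    have : x ^ 2 ^ (i + 1) = (x ^ 2) ^ 2 ^ i := by
      rw [← pow_mul, pow_succ, mul_comm]
    rw [this]
    exact hc2.pow_right _
  induction m with
  | zero => simp
  | succ m ih =>
    have hstep : (e + x) ^ 2 ^ (m + 1) = ((e + x) ^ 2 ^ m) ^ 2 := by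
      rw [← pow_mul, pow_succ]
    rw [hstep, ih]
    set S : R := ∑ i ∈ Finset.range (m + 1), x ^ 2 ^ i with hS
    have heS : e * S + S * e = x := by
      rw [hS, Finset.mul_sum, Finset.sum_mul, ← Finset.sum_add_distrib,
        Finset.sum_range_succ' (fun i => e * x ^ 2 ^ i + x ^ 2 ^ i * e)]
      have hzero : ∀ i ∈ Finset.range m,
          e * x ^ 2 ^ (i + 1) + x ^ 2 ^ (i + 1) * e = 0 := by
        intro i _
        rw [(hci i).eq]
        exact aux_two h2 _
      rw [Finset.sum_congr rfl hzero]
      simpa using hx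
    have hexp : (e + S) ^ 2 = e + x + S ^ 2 := by
      have : (e + S) ^ 2 = e * e + (e * S + S * e) + S * S := by
        rw [pow_two, mul_add, add_mul, add_mul]; abel
      rw [this, he, heS, ← pow_two]
    rw [hexp, hS, aux_sum_sq h2,
      Finset.sum_range_succ' (fun i => x ^ 2 ^ i) (m + 1)]
    simp only [pow_zero, pow_one]
    abel
end

section
/- Let R be a ring in which 2 = 0, let e ∈ R be an idempotent, and let x ∈ R satisfy e·x + x·e = x. If x·x is nilpotent, then there exists a natural number m such that (e + x)^(2^m) is an idempotent. -/
theorem stmt_7 {R : Type*} [Ring R] (h2 : (2 : R) = 0)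
    (e x : R) (he : e * e = e) (hx : e * x + x * e = x)
    (hnil : IsNilpotent (x * x)) :
    ∃ m : ℕ, IsIdempotentElem ((e + x) ^ (2 ^ m)) := by
  obtain ⟨N, hN⟩ := hnil
  have add2 : ∀ a : R, a + a = 0 := fun a => by
    rw [← two_mul, h2, zero_mul]
  have hex : e * x = x + x * e := by
    nth_rewrite 2 [← hx]
    rw [add_assoc, add2, add_zero]
  set s := e + x with hs
  set y := x * x with hy
  have hey : e * y = y * e := by
    have h1 : e * y = (x + x * e) * x := by rw [hy, ← mul_assoc, hex]
    rw [h1]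
    have : (x * e) * x = x * (e * x) := by rw [mul_assoc]
    rw [add_mul, this, hex, mul_add, ← add_assoc, add2, zero_add, ← mul_assoc]
  have hsy : s * y = y * s := by
    rw [hs, add_mul, mul_add, hey, hy, mul_assoc, mul_assoc]
  have hsq : s * s = s + y := by
    have h1 : (e + x) * (e + x) = e * e + (e * x + x * e) + x * x := by noncomm_ring
    rw [hs, h1, he, hx, ← hy, add_assoc]
  have hcomm : ∀ m : ℕ, s ^ (2 ^ m) * y ^ (2 ^ m) = y ^ (2 ^ m) * s ^ (2 ^ m) := by
    intro m
    exact Commute.pow_pow hsy _ _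
  have key : ∀ m : ℕ, s ^ (2 ^ (m + 1)) = s ^ (2 ^ m) + y ^ (2 ^ m) := by
    intro m
    induction m with
    | zero => simpa [pow_succ, pow_mul, sq] using hsq
    | succ n ih =>
      have h1 : s ^ (2 ^ (n + 2)) = (s ^ (2 ^ (n + 1))) * (s ^ (2 ^ (n + 1))) := by
        rw [← pow_add]
        congr 1
        ring
      rw [h1, ih]
      have hc := hcomm n
      rw [add_mul, mul_add, mul_add, ← hc, ← add_assoc, add_assoc (s ^ 2 ^ n * s ^ 2 ^ n),
        add2, add_zero, ← pow_add, ← pow_add, ← ih]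
      congr 2 <;> ring
  obtain ⟨m, hm⟩ : ∃ m : ℕ, N ≤ 2 ^ m := ⟨N, (Nat.lt_two_pow_self (n := N)).le⟩
  refine ⟨m, ?_⟩
  have hy0 : y ^ (2 ^ m) = 0 := by
    rw [← Nat.sub_add_cancel hm, pow_add, hN, mul_zero]
  have := key m
  rw [hy0, add_zero] at this
  show s ^ 2 ^ m * s ^ 2 ^ m = s ^ 2 ^ m
  rw [← pow_add, ← this]
  congr 1
  ring
end

section
/- Let R be a ring with identity 1 in which 2 = 0, let e ∈ R be an idempotent, and let x ∈ R be nilpotent with e·x + x·e = x. If (e + x)^(2^m) = 1 for some natural number m, then e = 1 and x = 0. -/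
theorem stmt_8 {R : Type*} [Ring R] (h2 : (2 : R) = 0)
    (e x : R) (he : e * e = e) (hxnil : IsNilpotent x)
    (hx : e * x + x * e = x) (m : ℕ) (h1 : (e + x) ^ (2 ^ m) = 1) :
    e = 1 ∧ x = 0 := by
  have hdbl : ∀ a : R, a + a = 0 := by
    intro a
    rw [← two_mul, h2, zero_mul]
  have h1x : e * x = x - x * e := eq_sub_of_add_eq hx
  have h2x : x * e = x - e * x := eq_sub_of_add_eq (by rw [add_comm]; exact hx)
  -- e x² + x² e = 0
  have hex2 : e * (x * x) + (x * x) * e = 0 := by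
    have A : e * (x * x) = x * x - x * e * x := by
      conv_lhs => rw [← mul_assoc, h1x]
      noncomm_ring
    have B : x * x * e = x * x - x * e * x := by
      conv_lhs => rw [mul_assoc, h2x]
      noncomm_ring
    rw [A, B, hdbl]
  -- key induction
  have key : ∀ k : ℕ, ∃ y : R, IsNilpotent y ∧ Commute x y ∧ e * y + y * e = 0 ∧
      (e + x) ^ (2 ^ k) = e + x + y := by
    intro k
    induction k with
    | zero => exact ⟨0, IsNilpotent.zero, Commute.zero_right x, by simp, by simp⟩
    | succ n ih =>
      obtain ⟨y, hynil, hxy, hey, hpow⟩ := ih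
      refine ⟨x * x + y * y, ?_, ?_, ?_, ?_⟩
      · exact Commute.isNilpotent_add
          (((hxy.mul_right hxy).mul_left (hxy.mul_right hxy)))
          ((Commute.refl x).isNilpotent_mul_left hxnil)
          ((Commute.refl y).isNilpotent_mul_left hynil)
      · exact (((Commute.refl x).mul_right (Commute.refl x)).add_right
          (hxy.mul_right hxy))
      · -- e y² + y² e = 0
        have h1y : e * y = -(y * e) := by
          rw [eq_neg_iff_add_eq_zero]; exact hey
        have h2y : y * e = -(e * y) := by
          rw [eq_neg_iff_add_eq_zero, add_comm]; exact hey
        have hey2 : e * (y * y) + (y * y) * e = 0 := by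
          have A : e * (y * y) = -(y * e * y) := by
            conv_lhs => rw [← mul_assoc, h1y]
            noncomm_ring
          have B : y * y * e = -(y * e * y) := by
            conv_lhs => rw [mul_assoc, h2y]
            noncomm_ring
          rw [A, B, ← neg_add, hdbl, neg_zero]
        calc e * (x * x + y * y) + (x * x + y * y) * e
            = (e * (x * x) + (x * x) * e) + (e * (y * y) + (y * y) * e) := by noncomm_ring
          _ = 0 := by rw [hex2, hey2, add_zero]
      · have h2n : (2 : ℕ) ^ (n + 1) = 2 ^ n * 2 := by ring
        rw [h2n, pow_mul, hpow, sq]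
        have hxyc : x * y + y * x = 0 := by rw [hxy.eq]; exact hdbl _
        calc (e + x + y) * (e + x + y)
            = e * e + (e * x + x * e) + (e * y + y * e) + (x * y + y * x)
              + (x * x + y * y) := by noncomm_ring
          _ = e + x + 0 + 0 + (x * x + y * y) := by rw [he, hx, hey, hxyc]
          _ = e + x + (x * x + y * y) := by abel
  obtain ⟨y, hynil, hxy, _, hpow⟩ := key m
  have hone : e + x + y = 1 := by rw [← hpow, h1]
  have hsub : (1 : R) - e = x + y := by rw [← hone]; abel
  have hnil : IsNilpotent (1 - e) := by
    rw [hsub]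
    exact Commute.isNilpotent_add hxy hxnil hynil
  have hid : IsIdempotentElem (1 - e) := IsIdempotentElem.one_sub he
  obtain ⟨N, hN⟩ := hnil
  have hNe : (1 : R) - e = 0 := by
    rcases Nat.eq_zero_or_pos N with h | h
    · subst h
      simp only [pow_zero] at hN
      haveI := subsingleton_of_zero_eq_one hN.symm
      exact Subsingleton.elim _ _
    · obtain ⟨N', rfl⟩ := Nat.exists_eq_succ_of_ne_zero h.ne'
      rw [hid.pow_succ_eq] at hN
      exact hN
  have he1 : e = 1 := (sub_eq_zero.mp hNe).symm
  refine ⟨he1, ?_⟩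
  rw [he1, one_mul, mul_one] at hx
  rw [hdbl] at hx
  exact hx.symm
end
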